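/- If T is nonexpansive with a fixed point and α ∈ (0,1), then the KM sequence x(k+1) = (1-α)x(k) + αTx(k) converges weakly to a fixed point of T (in finite dimensions, converges). -/

import Mathlib

open Filter Topology

local notation "⟪" x ", " y "⟫" => @inner ℝ _ _ x y

lemma km_combo_norm_sq {H : Type*} [NormedAddCommGroup H] [InnerProductSpace ℝ H]
    (α : ℝ) (a b : H) :
    ‖(1-α) • a + α • b‖^2 = (1-α)*‖a‖^2 + α*‖b‖^2 - α*(1-α)*‖b - a‖^2 := by
  have h1 : ‖(1-α) • a + α • b‖^2 = ⟪(1-α) • a + α • b, (1-α) • a + α • b⟫ :=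
    (real_inner_self_eq_norm_sq _).symm
  have h2 : ‖b - a‖^2 = ‖b‖^2 - 2*⟪b, a⟫ + ‖a‖^2 := by rw [norm_sub_sq_real]
  have ha : ⟪a, a⟫ = ‖a‖^2 := real_inner_self_eq_norm_sq a
  have hb : ⟪b, b⟫ = ‖b‖^2 := real_inner_self_eq_norm_sq b
  have hc : ⟪b, a⟫ = ⟪a, b⟫ := real_inner_comm a b
  simp only [inner_add_left, inner_add_right, real_inner_smul_left, real_inner_smul_right] at h1
  rw [h1, h2, ha, hb, hc] at *
  ring

lemma km_weak_cluster {H : Type*} [NormedAddCommGroup H] [InnerProductSpace ℝ H] [CompleteSpace H]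
    (y : ℕ → H) (C : ℝ) (hb : ∀ n, ‖y n‖ ≤ C) :
    ∃ (z : H) (φ : ℕ → ℕ), StrictMono φ ∧
      ∀ v : H, Tendsto (fun j => ⟪y (φ j), v⟫) atTop (𝓝 ⟪z, v⟫) := by
  have hC0 : 0 ≤ C := le_trans (norm_nonneg _) (hb 0)
  set g : ℕ → ℕ → ℝ := fun n m => ⟪y n, y m⟫ with hg
  have hgmem : ∀ n, g n ∈ Set.univ.pi (fun _ : ℕ => Set.Icc (-(C*C)) (C*C)) := by
    intro n m _
    have h1 : |g n m| ≤ C*C := by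
      calc |g n m| ≤ ‖y n‖ * ‖y m‖ := abs_real_inner_le_norm _ _
        _ ≤ C * C := mul_le_mul (hb n) (hb m) (norm_nonneg _) hC0
    exact abs_le.mp h1
  obtain ⟨f, -, φ, hφ, hconv⟩ :=
    (isCompact_univ_pi (fun _ : ℕ => isCompact_Icc)).tendsto_subseq hgmem
  rw [tendsto_pi_nhds] at hconv
  -- convergence on the span
  have hspan : ∀ v ∈ Submodule.span ℝ (Set.range y),
      ∃ L : ℝ, Tendsto (fun j => ⟪y (φ j), v⟫) atTop (𝓝 L) := by
    intro v hv
    induction hv using Submodule.span_induction with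
    | mem w hw =>
      obtain ⟨m, rfl⟩ := hw
      exact ⟨f m, hconv m⟩
    | zero => exact ⟨0, by simp [tendsto_const_nhds]⟩
    | add u w _ _ hu hw =>
      obtain ⟨Lu, hLu⟩ := hu; obtain ⟨Lw, hLw⟩ := hw
      exact ⟨Lu + Lw, by simpa [inner_add_right] using hLu.add hLw⟩
    | smul c u _ hu =>
      obtain ⟨Lu, hLu⟩ := hu
      exact ⟨c * Lu, by simpa [real_inner_smul_right] using hLu.const_mul c⟩
  -- convergence on the closure of the span
  have hclos : ∀ v ∈ closure (Submodule.span ℝ (Set.range y) : Set H),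
      ∃ L : ℝ, Tendsto (fun j => ⟪y (φ j), v⟫) atTop (𝓝 L) := by
    intro v hv
    have hcau : CauchySeq (fun j => ⟪y (φ j), v⟫) := by
      rw [Metric.cauchySeq_iff']
      intro ε hε
      obtain ⟨w, hw, hwv⟩ := Metric.mem_closure_iff.mp hv (ε/3/(C+1)) (by positivity)
      obtain ⟨L, hL⟩ := hspan w hw
      obtain ⟨N, hN⟩ := Metric.cauchySeq_iff'.mp hL.cauchySeq (ε/3) (by positivity)
      refine ⟨N, fun n hn => ?_⟩
      have key : ∀ j, |⟪y (φ j), v⟫ - ⟪y (φ j), w⟫| < ε/3 := by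
        intro j
        have h2 : |⟪y (φ j), v - w⟫| ≤ C * ‖v - w‖ :=
          le_trans (abs_real_inner_le_norm _ _)
            (mul_le_mul_of_nonneg_right (hb _) (norm_nonneg _))
        rw [inner_sub_right] at h2
        have h3 : ‖v - w‖ < ε/3/(C+1) := by
          rw [← dist_eq_norm]; exact hwv
        have h4 : C * ‖v - w‖ < ε/3 := by
          have h5 : C / (C+1) < 1 := (div_lt_one (by positivity)).mpr (by linarith)
          calc C * ‖v - w‖ ≤ C * (ε/3/(C+1)) := mul_le_mul_of_nonneg_left h3.le hC0
            _ = ε/3 * (C/(C+1)) := by ring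
            _ < ε/3 * 1 := by
                exact mul_lt_mul_of_pos_left h5 (by positivity)
            _ = ε/3 := mul_one _
        linarith [h2]
      have kn := key n; have kN := key N
      have hNn := hN n hn
      rw [Real.dist_eq] at hNn ⊢
      calc |⟪y (φ n), v⟫ - ⟪y (φ N), v⟫|
          ≤ |⟪y (φ n), v⟫ - ⟪y (φ n), w⟫| + |⟪y (φ n), w⟫ - ⟪y (φ N), w⟫|
            + |⟪y (φ N), w⟫ - ⟪y (φ N), v⟫| := by
              have := abs_sub_le (⟪y (φ n), v⟫) (⟪y (φ n), w⟫) (⟪y (φ N), v⟫)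
              have := abs_sub_le (⟪y (φ n), w⟫) (⟪y (φ N), w⟫) (⟪y (φ N), v⟫)
              linarith
        _ < ε/3 + ε/3 + ε/3 := by
              have : |⟪y (φ N), w⟫ - ⟪y (φ N), v⟫| = |⟪y (φ N), v⟫ - ⟪y (φ N), w⟫| :=
                abs_sub_comm _ _
              rw [this]; exact add_lt_add (add_lt_add kn hNn) kN
        _ = ε := by ring
    exact cauchySeq_tendsto_of_complete hcau
  -- reduce arbitrary v to the closure via orthogonal projection
  set K : Submodule ℝ H := (Submodule.span ℝ (Set.range y)).topologicalClosure with hK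
  haveI : CompleteSpace K := (Submodule.span ℝ (Set.range y)).isClosed_topologicalClosure.completeSpace_coe
  have hyK : ∀ n, y n ∈ K :=
    fun n => Submodule.le_topologicalClosure _ (Submodule.subset_span ⟨n, rfl⟩)
  have hproj : ∀ (v : H) (n : ℕ), ⟪y n, v⟫ = ⟪y n, (K.orthogonalProjection v : H)⟫ := by
    intro v n
    have horth : v - (K.orthogonalProjection v : H) ∈ Kᗮ :=
      Submodule.sub_starProjection_mem_orthogonal v
    have h0 : ⟪y n, v - (K.orthogonalProjection v : H)⟫ = 0 :=
      (Submodule.mem_orthogonal K _).mp horth (y n) (hyK n)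
    rw [inner_sub_right] at h0
    linarith
  have hex : ∀ v : H, ∃ L : ℝ, Tendsto (fun j => ⟪y (φ j), v⟫) atTop (𝓝 L) := by
    intro v
    obtain ⟨L, hL⟩ := hclos ((K.orthogonalProjection v : H)) (by
      rw [← Submodule.topologicalClosure_coe]
      exact (K.orthogonalProjection v).2)
    exact ⟨L, hL.congr fun j => (hproj v (φ j)).symm⟩
  choose F hF using hex
  have hFadd : ∀ u w : H, F (u + w) = F u + F w := by
    intro u w
    refine tendsto_nhds_unique (hF (u + w)) ?_
    simpa [inner_add_right] using (hF u).add (hF w)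
  have hFsmul : ∀ (c : ℝ) (u : H), F (c • u) = c * F u := by
    intro c u
    refine tendsto_nhds_unique (hF (c • u)) ?_
    simpa [real_inner_smul_right] using (hF u).const_mul c
  have hFbound : ∀ v : H, ‖F v‖ ≤ C * ‖v‖ := by
    intro v
    rw [Real.norm_eq_abs]
    refine le_of_tendsto (hF v).abs (Filter.Eventually.of_forall fun j => ?_)
    exact le_trans (abs_real_inner_le_norm _ _)
      (mul_le_mul_of_nonneg_right (hb _) (norm_nonneg _))
  let Flin : H →ₗ[ℝ] ℝ :=
    { toFun := F, map_add' := hFadd, map_smul' := hFsmul }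
  let Fcont : H →L[ℝ] ℝ := Flin.mkContinuous C hFbound
  refine ⟨(InnerProductSpace.toDual ℝ H).symm Fcont, φ, hφ, fun v => ?_⟩
  have hz : ⟪(InnerProductSpace.toDual ℝ H).symm Fcont, v⟫ = Fcont v :=
    InnerProductSpace.toDual_symm_apply
  rw [hz]
  exact hF v

lemma km_demiclosed {H : Type*} [NormedAddCommGroup H] [InnerProductSpace ℝ H]
    (T : H → H) (hT : ∀ x y, ‖T x - T y‖ ≤ ‖x - y‖)
    (u : ℕ → H) (z : H) (C : ℝ) (hb : ∀ j, ‖u j‖ ≤ C)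
    (hw : ∀ v : H, Tendsto (fun j => ⟪u j, v⟫) atTop (𝓝 ⟪z, v⟫))
    (hres : Tendsto (fun j => ‖u j - T (u j)‖) atTop (𝓝 0)) :
    T z = z := by
  set ε : ℕ → ℝ := fun j => ‖u j - T (u j)‖ with hε
  set d : ℕ → ℝ := fun j => ‖u j - z‖ with hd
  have hdD : ∀ j, d j ≤ C + ‖z‖ := fun j =>
    le_trans (norm_sub_le _ _) (add_le_add_left (hb j) _)
  have hd0 : ∀ j, 0 ≤ d j := fun j => norm_nonneg _
  have hε0 : ∀ j, 0 ≤ ε j := fun j => norm_nonneg _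
  set RHS : ℕ → ℝ := fun j =>
    2 * (ε j * d j) + ε j ^ 2 - 2 * (⟪u j, z - T z⟫ - ⟪z, z - T z⟫) with hRHSdef
  have h1 : Tendsto (fun j => ε j * d j) atTop (𝓝 0) := by
    apply squeeze_zero (fun j => mul_nonneg (hε0 j) (hd0 j))
      (fun j => mul_le_mul_of_nonneg_left (hdD j) (hε0 j))
    simpa using hres.mul_const (C + ‖z‖)
  have h2 : Tendsto (fun j => ε j ^ 2) atTop (𝓝 0) := by
    have := hres.mul hres
    simpa [hε, sq] using this
  have h3 : Tendsto (fun j => ⟪u j, z - T z⟫ - ⟪z, z - T z⟫) atTop (𝓝 0) := by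
    have := (hw (z - T z)).sub_const (⟪z, z - T z⟫)
    simpa using this
  have hRHS : Tendsto RHS atTop (𝓝 0) := by
    have := ((h1.const_mul 2).add h2).sub (h3.const_mul 2)
    simpa [hRHSdef] using this
  have hbound : ∀ j, ‖z - T z‖ ^ 2 ≤ RHS j := by
    intro j
    have e1 : ‖u j - T z‖ ^ 2 = ‖u j - z‖ ^ 2 + 2 * ⟪u j - z, z - T z⟫ + ‖z - T z‖ ^ 2 := by
      have hsplit : u j - T z = (u j - z) + (z - T z) := by abel
      rw [hsplit, norm_add_sq_real]
    have e2 : ‖u j - T z‖ ≤ ε j + ‖u j - z‖ := by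
      have htri : ‖u j - T z‖ ≤ ‖u j - T (u j)‖ + ‖T (u j) - T z‖ := by
        have := dist_triangle (u j) (T (u j)) (T z)
        simpa [dist_eq_norm] using this
      exact le_trans htri (add_le_add_right (hT (u j) z) _)
    have e3 : ‖u j - T z‖ ^ 2 ≤ (ε j + ‖u j - z‖) ^ 2 := by
      have := pow_le_pow_left₀ (norm_nonneg _) e2 2
      exact this
    have e4 : ⟪u j - z, z - T z⟫ = ⟪u j, z - T z⟫ - ⟪z, z - T z⟫ := inner_sub_left _ _ _
    simp only [hRHSdef, hd]
    nlinarith [e1, e3, e4]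
  have hfin : ‖z - T z‖ ^ 2 ≤ 0 := ge_of_tendsto hRHS (Filter.Eventually.of_forall hbound)
  have h0 : ‖z - T z‖ = 0 := by nlinarith [norm_nonneg (z - T z)]
  exact (sub_eq_zero.mp (norm_eq_zero.mp h0)).symm

/-- If T is nonexpansive with a fixed point and α ∈ (0,1), the KM sequence
x(k+1) = (1-α)x(k) + αT x(k) converges weakly to a fixed point of T. -/
theorem km_weak_convergence {H : Type*} [NormedAddCommGroup H] [InnerProductSpace ℝ H]
    [CompleteSpace H]
    (T : H → H) (hT : ∀ x y, ‖T x - T y‖ ≤ ‖x - y‖)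
    (hfix : ∃ x, T x = x)
    (α : ℝ) (hα : α ∈ Set.Ioo (0 : ℝ) 1)
    (x : ℕ → H) (hrec : ∀ k, x (k + 1) = (1 - α) • x k + α • T (x k)) :
    ∃ xstar : H, T xstar = xstar ∧
      ∀ φ : H →L[ℝ] ℝ,
        Filter.Tendsto (fun k => φ (x k)) Filter.atTop (nhds (φ xstar)) := by
  obtain ⟨p, hp⟩ := hfix
  obtain ⟨hα0, hα1⟩ := hα
  have key : ∀ (q : H), ∀ k, ‖x (k+1) - q‖^2 =
      (1-α)*‖x k - q‖^2 + α*‖T (x k) - q‖^2 - α*(1-α)*‖T (x k) - x k‖^2 := by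
    intro q k
    have hx : x (k+1) - q = (1-α) • (x k - q) + α • (T (x k) - q) := by
      rw [hrec k]; module
    rw [hx, km_combo_norm_sq α (x k - q) (T (x k) - q), sub_sub_sub_cancel_right]
  have fejer2 : ∀ q, T q = q → ∀ k,
      ‖x (k+1) - q‖^2 ≤ ‖x k - q‖^2 - α*(1-α)*‖T (x k) - x k‖^2 := by
    intro q hq k
    have h1 := key q k
    have h2 : ‖T (x k) - q‖ ≤ ‖x k - q‖ := by
      calc ‖T (x k) - q‖ = ‖T (x k) - T q‖ := by rw [hq]
        _ ≤ ‖x k - q‖ := hT _ _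
    have h4 : ‖T (x k) - q‖^2 ≤ ‖x k - q‖^2 := by
      nlinarith [norm_nonneg (T (x k) - q)]
    have h5 : α * ‖T (x k) - q‖^2 ≤ α * ‖x k - q‖^2 :=
      mul_le_mul_of_nonneg_left h4 hα0.le
    linarith
  have fejer : ∀ q, T q = q → ∀ k, ‖x (k+1) - q‖ ≤ ‖x k - q‖ := by
    intro q hq k
    have h1 := fejer2 q hq k
    have h2 : (0:ℝ) ≤ α*(1-α)*‖T (x k) - x k‖^2 :=
      mul_nonneg (mul_nonneg hα0.le (by linarith)) (sq_nonneg _)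
    have h3 : ‖x (k+1) - q‖^2 ≤ ‖x k - q‖^2 := by linarith
    exact (pow_le_pow_iff_left₀ (norm_nonneg _) (norm_nonneg _) two_ne_zero).mp h3
  have hmono : ∀ q, T q = q → Antitone (fun k => ‖x k - q‖) := fun q hq =>
    antitone_nat_of_succ_le (fejer q hq)
  have hC : ∀ k, ‖x k‖ ≤ ‖x 0 - p‖ + ‖p‖ := by
    intro k
    calc ‖x k‖ = ‖(x k - p) + p‖ := by rw [sub_add_cancel]
      _ ≤ ‖x k - p‖ + ‖p‖ := norm_add_le _ _
      _ ≤ ‖x 0 - p‖ + ‖p‖ := add_le_add_left (hmono p hp (Nat.zero_le k)) _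
  -- residual convergence
  have hsumle : ∀ N : ℕ, ∑ k ∈ Finset.range N, α*(1-α)*‖T (x k) - x k‖^2
      ≤ ‖x 0 - p‖^2 - ‖x N - p‖^2 := by
    intro N
    induction N with
    | zero => simp
    | succ n ih =>
      rw [Finset.sum_range_succ]
      have := fejer2 p hp n
      linarith
  have hsummable : Summable (fun k => ‖T (x k) - x k‖^2) := by
    have hpos : (0:ℝ) < α*(1-α) := mul_pos hα0 (by linarith)
    refine summable_of_sum_range_le (fun k => sq_nonneg _)
      (fun N => ?_ : ∀ N, _ ≤ ‖x 0 - p‖^2 / (α*(1-α)))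
    rw [le_div_iff₀ hpos]
    have h1 := hsumle N
    have h2 : (0:ℝ) ≤ ‖x N - p‖^2 := sq_nonneg _
    calc (∑ k ∈ Finset.range N, ‖T (x k) - x k‖^2) * (α*(1-α))
        = ∑ k ∈ Finset.range N, α*(1-α)*‖T (x k) - x k‖^2 := by
          rw [Finset.sum_mul]; exact Finset.sum_congr rfl (fun k _ => by ring)
      _ ≤ ‖x 0 - p‖^2 := by linarith
  have hres : Tendsto (fun k => ‖x k - T (x k)‖) atTop (𝓝 0) := by
    have hres2 : Tendsto (fun k => ‖T (x k) - x k‖^2) atTop (𝓝 0) :=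
      hsummable.tendsto_atTop_zero
    have h1 : Tendsto (fun k => Real.sqrt (‖T (x k) - x k‖^2)) atTop (𝓝 (Real.sqrt 0)) :=
      (Real.continuous_sqrt.tendsto 0).comp hres2
    rw [Real.sqrt_zero] at h1
    refine h1.congr fun k => ?_
    rw [Real.sqrt_sq (norm_nonneg _), norm_sub_rev]
  -- convergence of distances to fixed points
  have hlim : ∀ q : H, T q = q → ∃ L : ℝ,
      Tendsto (fun k => ‖x k - q‖^2) atTop (𝓝 L) := by
    intro q hq
    have hbdd : BddBelow (Set.range (fun k => ‖x k - q‖)) := by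
      refine ⟨0, ?_⟩
      rintro r ⟨k, rfl⟩
      exact norm_nonneg _
    have h := tendsto_atTop_ciInf (hmono q hq) hbdd
    exact ⟨_, h.pow 2⟩
  -- Opial uniqueness of weak subsequential limits
  have huniq : ∀ (z z' : H), T z = z → T z' = z' →
      ∀ (ns ns' : ℕ → ℕ), Tendsto ns atTop atTop → Tendsto ns' atTop atTop →
      (∀ v : H, Tendsto (fun j => ⟪x (ns j), v⟫) atTop (𝓝 ⟪z, v⟫)) →
      (∀ v : H, Tendsto (fun j => ⟪x (ns' j), v⟫) atTop (𝓝 ⟪z', v⟫)) → z = z' := by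
    intro z z' hz hz' ns ns' hns hns' hwz hwz'
    obtain ⟨Lz, hLz⟩ := hlim z hz
    obtain ⟨Lz', hLz'⟩ := hlim z' hz'
    have hdiff : ∀ k, ‖x k - z‖^2 - ‖x k - z'‖^2
        = ‖z‖^2 - ‖z'‖^2 - 2*⟪x k, z - z'⟫ := by
      intro k
      have h1 := norm_sub_sq_real (x k) z
      have h2 := norm_sub_sq_real (x k) z'
      have h3 : ⟪x k, z - z'⟫ = ⟪x k, z⟫ - ⟪x k, z'⟫ := inner_sub_right _ _ _
      linarith
    have hD : Tendsto (fun k => ‖x k - z‖^2 - ‖x k - z'‖^2) atTop (𝓝 (Lz - Lz')) :=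
      hLz.sub hLz'
    have e1 : Lz - Lz' = ‖z‖^2 - ‖z'‖^2 - 2*⟪z, z - z'⟫ := by
      refine tendsto_nhds_unique (hD.comp hns) ?_
      have h' : Tendsto (fun j => ‖z‖^2 - ‖z'‖^2 - 2*⟪x (ns j), z - z'⟫) atTop
          (𝓝 (‖z‖^2 - ‖z'‖^2 - 2*⟪z, z - z'⟫)) :=
        tendsto_const_nhds.sub ((hwz (z - z')).const_mul 2)
      exact h'.congr fun j => (hdiff (ns j)).symm
    have e2 : Lz - Lz' = ‖z‖^2 - ‖z'‖^2 - 2*⟪z', z - z'⟫ := by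
      refine tendsto_nhds_unique (hD.comp hns') ?_
      have h' : Tendsto (fun j => ‖z‖^2 - ‖z'‖^2 - 2*⟪x (ns' j), z - z'⟫) atTop
          (𝓝 (‖z‖^2 - ‖z'‖^2 - 2*⟪z', z - z'⟫)) :=
        tendsto_const_nhds.sub ((hwz' (z - z')).const_mul 2)
      exact h'.congr fun j => (hdiff (ns' j)).symm
    have h0 : ⟪z - z', z - z'⟫ = (0:ℝ) := by
      rw [inner_sub_left]
      linarith
    exact sub_eq_zero.mp (inner_self_eq_zero.mp h0)
  set C := ‖x 0 - p‖ + ‖p‖ with hCdef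
  obtain ⟨z, φ0, hφ0, hwz0⟩ := km_weak_cluster x C hC
  have hz : T z = z := by
    refine km_demiclosed T hT (fun j => x (φ0 j)) z C (fun j => hC _) hwz0 ?_
    exact hres.comp hφ0.tendsto_atTop
  refine ⟨z, hz, ?_⟩
  have hwv : ∀ v : H, Filter.Tendsto (fun k => ⟪x k, v⟫) atTop (𝓝 ⟪z, v⟫) := by
    intro v
    apply Filter.tendsto_of_subseq_tendsto
    intro ns hns
    obtain ⟨z', ψ, hψ, hconv'⟩ := km_weak_cluster (fun j => x (ns j)) C (fun j => hC _)
    have hns2 : Filter.Tendsto (fun j => ns (ψ j)) atTop atTop := hns.comp hψ.tendsto_atTop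
    have hz' : T z' = z' := by
      refine km_demiclosed T hT (fun j => x (ns (ψ j))) z' C (fun j => hC _) hconv' ?_
      exact hres.comp hns2
    have hzz : z' = z :=
      huniq z' z hz' hz (fun j => ns (ψ j)) φ0 hns2 hφ0.tendsto_atTop hconv' hwz0
    exact ⟨ψ, hzz ▸ hconv' v⟩
  intro φ
  set w := (InnerProductSpace.toDual ℝ H).symm φ with hwdef
  have hφw : ∀ u : H, φ u = ⟪u, w⟫ := by
    intro u
    rw [real_inner_comm]
    exact (InnerProductSpace.toDual_symm_apply).symm
  simp only [hφw]
  exact hwv w
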